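/- For all 0 < x < 1, we have −((x+1)/x)·ln((3+x)/4) + ln x + ln(3/2) ≥ 0. -/

import Mathlib

lemma logA (s : ℝ) (hs : 0 < s) : Real.log s ≤ (s^2 + 4*s - 5) / (4*s + 2) := by
  have hderiv : ∀ t : ℝ, 0 < t →
      HasDerivAt (fun u : ℝ => (u^2 + 4*u - 5) / (4*u + 2))
        ((4*t^2 + 4*t + 28) / (4*t + 2)^2) t := by
    intro t ht
    have hne : 4*t + 2 ≠ 0 := by nlinarith
    have h1 : HasDerivAt (fun u : ℝ => u^2 + 4*u - 5) (2*t + 4) t := by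
      have := ((hasDerivAt_pow 2 t).add (((hasDerivAt_id t).const_mul 4)))
      simpa using (this.sub_const 5)
    have h2 : HasDerivAt (fun u : ℝ => 4*u + 2) 4 t := by
      simpa using ((hasDerivAt_id t).const_mul 4).add_const 2
    have h3 := h1.fun_div h2 hne
    refine h3.congr_deriv ?_
    ring
  rcases le_total 1 s with h | h
  · have h0 : (0:ℝ) ∉ Set.uIcc 1 s := by
      rw [Set.uIcc_of_le h]
      rintro ⟨h1, h2⟩
      linarith
    have hlog : Real.log s = ∫ t in (1:ℝ)..s, t⁻¹ := by
      rw [integral_inv h0, div_one]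
    have hcont : ContinuousOn (fun t : ℝ => (4*t^2 + 4*t + 28) / (4*t + 2)^2) (Set.uIcc 1 s) := by
      apply ContinuousOn.div (by fun_prop) (by fun_prop)
      intro t htt
      rw [Set.uIcc_of_le h] at htt
      exact pow_ne_zero 2 (by nlinarith [htt.1])
    have hcont' : ContinuousOn (fun t : ℝ => t⁻¹) (Set.uIcc 1 s) := by
      apply ContinuousOn.inv₀ (by fun_prop)
      intro t htt
      rw [Set.uIcc_of_le h] at htt
      nlinarith [htt.1]
    have hF : (∫ t in (1:ℝ)..s, (4*t^2 + 4*t + 28) / (4*t + 2)^2) = (s^2 + 4*s - 5) / (4*s + 2) := by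
      rw [intervalIntegral.integral_eq_sub_of_hasDerivAt
        (fun t htt => hderiv t (by rw [Set.uIcc_of_le h] at htt; linarith [htt.1]))
        (hcont.intervalIntegrable)]
      norm_num
    rw [hlog, ← hF]
    apply intervalIntegral.integral_mono_on h (hcont'.intervalIntegrable) (hcont.intervalIntegrable)
    intro t htt
    have ht1 : 1 ≤ t := htt.1
    have ht0 : 0 < t := by linarith
    rw [inv_eq_one_div, div_le_div_iff₀ ht0 (by positivity)]
    nlinarith [mul_nonneg (mul_nonneg (sub_nonneg.2 ht1) (sub_nonneg.2 ht1)) (sub_nonneg.2 ht1)]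
  · have h0 : (0:ℝ) ∉ Set.uIcc s 1 := by
      rw [Set.uIcc_of_le h]
      rintro ⟨h1, h2⟩
      linarith
    have hlog : Real.log s = -∫ t in s..(1:ℝ), t⁻¹ := by
      rw [integral_inv h0, Real.log_div one_ne_zero (ne_of_gt hs)]
      simp
    have hcont : ContinuousOn (fun t : ℝ => (4*t^2 + 4*t + 28) / (4*t + 2)^2) (Set.uIcc s 1) := by
      apply ContinuousOn.div (by fun_prop) (by fun_prop)
      intro t htt
      rw [Set.uIcc_of_le h] at htt
      exact pow_ne_zero 2 (by nlinarith [htt.1])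
    have hcont' : ContinuousOn (fun t : ℝ => t⁻¹) (Set.uIcc s 1) := by
      apply ContinuousOn.inv₀ (by fun_prop)
      intro t htt
      rw [Set.uIcc_of_le h] at htt
      nlinarith [htt.1]
    have hF : (∫ t in s..(1:ℝ), (4*t^2 + 4*t + 28) / (4*t + 2)^2) = -((s^2 + 4*s - 5) / (4*s + 2)) := by
      rw [intervalIntegral.integral_eq_sub_of_hasDerivAt
        (fun t htt => hderiv t (by rw [Set.uIcc_of_le h] at htt; linarith [htt.1]))
        (hcont.intervalIntegrable)]
      norm_num
    have hmono : (∫ t in s..(1:ℝ), (4*t^2 + 4*t + 28) / (4*t + 2)^2) ≤ ∫ t in s..(1:ℝ), t⁻¹ := by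
      apply intervalIntegral.integral_mono_on h (hcont.intervalIntegrable) (hcont'.intervalIntegrable)
      intro t htt
      have ht1 : t ≤ 1 := htt.2
      have ht0 : 0 < t := lt_of_lt_of_le hs htt.1
      rw [inv_eq_one_div, div_le_div_iff₀ (by positivity) ht0]
      nlinarith [mul_nonneg (mul_nonneg (sub_nonneg.2 ht1) (sub_nonneg.2 ht1)) (sub_nonneg.2 ht1)]
    rw [hlog]
    rw [hF] at hmono
    linarith

theorem stmt_11 (x : ℝ) (h0 : 0 < x) (h1 : x < 1) :
    -((x + 1) / x) * Real.log ((3 + x) / 4) + Real.log x + Real.log (3 / 2) ≥ 0 := by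
  have h3x : (0:ℝ) < 3 + x := by linarith
  have hxne : x ≠ 0 := ne_of_gt h0
  have h3xne : (3:ℝ) + x ≠ 0 := ne_of_gt h3x
  -- identity : log (6x/(3+x)) = log x + log (3/2) - log ((3+x)/4)
  have hid : Real.log (6*x/(3+x)) = Real.log x + Real.log (3/2) - Real.log ((3+x)/4) := by
    rw [show 6*x/(3+x) = (x * (3/2)) / ((3+x)/4) by field_simp; ring]
    rw [Real.log_div (by positivity) (by positivity), Real.log_mul hxne (by norm_num)]
  -- bound on log ((3+x)/4)
  have hA := logA ((3+x)/4) (by positivity)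
  -- bound on log ((3+x)/(6x))
  have hB := logA ((3+x)/(6*x)) (by positivity)
  have hinv : Real.log (6*x/(3+x)) = -Real.log ((3+x)/(6*x)) := by
    rw [← Real.log_inv]
    congr 1
    field_simp
  -- key inequality
  have hkey : 0 ≤ -Real.log ((3+x)/4) + x * Real.log (6*x/(3+x)) := by
    rw [hinv]
    have hB' : x * Real.log ((3+x)/(6*x)) ≤ x * ((((3+x)/(6*x))^2 + 4*((3+x)/(6*x)) - 5) / (4*((3+x)/(6*x)) + 2)) :=
      mul_le_mul_of_nonneg_left hB (le_of_lt h0)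
    have hrat : 0 ≤ -(((((3+x)/4)^2 + 4*((3+x)/4) - 5) / (4*((3+x)/4) + 2)))
        - x * ((((3+x)/(6*x))^2 + 4*((3+x)/(6*x)) - 5) / (4*((3+x)/(6*x)) + 2)) := by
      have heq : -(((((3+x)/4)^2 + 4*((3+x)/4) - 5) / (4*((3+x)/4) + 2)))
          - x * ((((3+x)/(6*x))^2 + 4*((3+x)/(6*x)) - 5) / (4*((3+x)/(6*x)) + 2))
          = (298*x^3 + 1121*x^2 - 720*x + 117) / (48*(x+5)*(4*x+3)) := by
        have h5 : x + 5 ≠ 0 := by positivity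
        have h43 : 4*x + 3 ≠ 0 := by positivity
        field_simp
        ring
      rw [heq]
      apply div_nonneg _ (by positivity)
      nlinarith [sq_nonneg (x - 360/1121), pow_pos h0 3]
    linarith
  -- conclude
  have hgoal : -((x + 1) / x) * Real.log ((3 + x) / 4) + Real.log x + Real.log (3 / 2)
      = (-Real.log ((3+x)/4) + x * Real.log (6*x/(3+x))) / x := by
    rw [hid]
    field_simp
    ring
  rw [ge_iff_le, hgoal]
  exact div_nonneg hkey (le_of_lt h0)
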